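/- Let ρ > 0, ε ∈ [0,1), ν ∈ [0,1], m₁, m₂, α̃, α₂ ∈ ℝ and ι_c ≥ 0. With b, c as in the critical case η = 0, i.e. b(u) = (m₁u/(1−ε))·(1 + νρu/2)/(2+ρu) and c(u) = −((1−ν)²/(1−ε))·(m₁²/ρ²)·[1/2 − 1/(2+ρu)] − (ν·m₁²/(ρ²(1−ε)))·[(1/2 − ν/4)·ρu + (ν/8)·ρ²u² + (ν/48)·ρ³u³], define e(u) = −((1−ν)²/(1−ε))·(m₂ − m₁(2α̃ρ − α₂m₁)/ρ²)·[𝓘₀(u)/2 − (exp(2ι_c u)/ρ)·L(ρ, −2ι_c, u)] + (ν(1−ν)m₁/(2ρ²(1−ε)))·(α̃ − α₂m₁/ρ)·ρ²·𝓘₁(u) − (α₂ν²m₁²/(4ρ³(1−ε)))·[ρ²·𝓘₁(u) + (1/2)·ρ³·𝓘₂(u) + (1/12)·ρ⁴·𝓘₃(u)]. Then e(0) = 0 and, for all u ≥ 0, e'(u) = 2ι_c·e(u) + α̃·(1−ν)·b(u) + α₂·c(u) + ((1−ν)²·m₂/(1−ε))·[1/(2+ρu) − 1/2]. -/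

import Mathlib

/-- L(r, λ, t) = r·∫₀ᵗ exp(λs)/(2 + rs) ds. -/
noncomputable def Lfun (r lam t : ℝ) : ℝ := r * ∫ s in (0:ℝ)..t, Real.exp (lam * s) / (2 + r * s)

/-- 𝓘_p(u) = exp(2ι_c u)·∫₀ᵘ s^p·exp(−2ι_c s) ds. -/
noncomputable def Ifun (ιc : ℝ) (p : ℕ) (u : ℝ) : ℝ :=
  Real.exp (2 * ιc * u) * ∫ s in (0:ℝ)..u, s ^ p * Real.exp (-(2 * ιc * s))

lemma hasDerivAt_Ifun (ιc : ℝ) (p : ℕ) (u : ℝ) :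
    HasDerivAt (Ifun ιc p) (2 * ιc * Ifun ιc p u + u ^ p) u := by
  have hc : Continuous fun s : ℝ => s ^ p * Real.exp (-(2 * ιc * s)) := by continuity
  have hF : HasDerivAt (fun t => ∫ s in (0:ℝ)..t, s ^ p * Real.exp (-(2 * ιc * s)))
      (u ^ p * Real.exp (-(2 * ιc * u))) u :=
    intervalIntegral.integral_hasDerivAt_right (hc.intervalIntegrable _ _)
      (hc.stronglyMeasurableAtFilter _ _) hc.continuousAt
  have he : HasDerivAt (fun t : ℝ => Real.exp (2 * ιc * t)) (2 * ιc * Real.exp (2 * ιc * u)) u := by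
    have := ((hasDerivAt_id u).const_mul (2 * ιc)).exp
    simpa [mul_comm] using this
  have key : Real.exp (2*ιc*u) * Real.exp (-(2*ιc*u)) = 1 := by
    rw [← Real.exp_add]; simp
  have := he.mul hF
  have h2 : HasDerivAt (Ifun ιc p) _ u := this
  convert h2 using 1
  unfold Ifun
  linear_combination -((u:ℝ) ^ p) * key

lemma hasDerivAt_Lfun (ρ lam u : ℝ) (hρ : 0 < ρ) (hu : 0 ≤ u) :
    HasDerivAt (Lfun ρ lam) (ρ * (Real.exp (lam * u) / (2 + ρ * u))) u := by
  set U : Set ℝ := Set.Ioi (-(2/ρ)) with hU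
  have hUopen : IsOpen U := isOpen_Ioi
  have hpos : ∀ s ∈ U, (0:ℝ) < 2 + ρ * s := by
    intro s hs
    have h1 : -(2/ρ) < s := hs
    have h2 : ρ * (-(2/ρ)) = -2 := by field_simp
    nlinarith [mul_lt_mul_of_pos_left h1 hρ]
  have hcont : ContinuousOn (fun s : ℝ => Real.exp (lam * s) / (2 + ρ * s)) U := by
    apply ContinuousOn.div
    · exact (Real.continuous_exp.comp (continuous_const.mul continuous_id)).continuousOn
    · exact (continuous_const.add (continuous_const.mul continuous_id)).continuousOn
    · exact fun s hs => ne_of_gt (hpos s hs)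
  have h0U : (0:ℝ) ∈ U := by
    simp only [hU, Set.mem_Ioi]
    have : (0:ℝ) < 2/ρ := by positivity
    linarith
  have huU : u ∈ U := by
    simp only [hU, Set.mem_Ioi]
    have : (0:ℝ) < 2/ρ := by positivity
    linarith
  have hsub : Set.uIcc (0:ℝ) u ⊆ U := by
    rw [Set.uIcc_of_le hu]
    intro s hs
    simp only [hU, Set.mem_Ioi]
    have : (0:ℝ) < 2/ρ := by positivity
    have := hs.1
    linarith
  have hF : HasDerivAt (fun t => ∫ s in (0:ℝ)..t, Real.exp (lam * s) / (2 + ρ * s))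
      (Real.exp (lam * u) / (2 + ρ * u)) u :=
    intervalIntegral.integral_hasDerivAt_right
      ((hcont.mono hsub).intervalIntegrable)
      (hcont.stronglyMeasurableAtFilter hUopen u huU)
      (hcont.continuousAt (hUopen.mem_nhds huU))
  exact hF.const_mul ρ


/-- b(u) in the critical case η = 0. -/
noncomputable def bCrit (ρ ε ν m₁ : ℝ) (u : ℝ) : ℝ :=
  (m₁ * u / (1 - ε)) * (1 + ν * ρ * u / 2) / (2 + ρ * u)

/-- c(u) in the critical case η = 0. -/
noncomputable def cCrit (ρ ε ν m₁ : ℝ) (u : ℝ) : ℝ :=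
  -((1 - ν) ^ 2 / (1 - ε)) * (m₁ ^ 2 / ρ ^ 2) * (1 / 2 - 1 / (2 + ρ * u))
    - (ν * m₁ ^ 2 / (ρ ^ 2 * (1 - ε)))
        * ((1 / 2 - ν / 4) * (ρ * u) + (ν / 8) * (ρ * u) ^ 2 + (ν / 48) * (ρ * u) ^ 3)

/-- e(u) in the critical case η = 0. -/
noncomputable def eCrit (ρ ε ν m₁ m₂ αt α₂ ιc : ℝ) (u : ℝ) : ℝ :=
  -((1 - ν) ^ 2 / (1 - ε)) * (m₂ - m₁ * (2 * αt * ρ - α₂ * m₁) / ρ ^ 2)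
      * (Ifun ιc 0 u / 2 - (Real.exp (2 * ιc * u) / ρ) * Lfun ρ (-(2 * ιc)) u)
    + (ν * (1 - ν) * m₁ / (2 * ρ ^ 2 * (1 - ε))) * (αt - α₂ * m₁ / ρ) * (ρ ^ 2 * Ifun ιc 1 u)
    - (α₂ * ν ^ 2 * m₁ ^ 2 / (4 * ρ ^ 3 * (1 - ε)))
        * (ρ ^ 2 * Ifun ιc 1 u + (1 / 2) * ρ ^ 3 * Ifun ιc 2 u + (1 / 12) * ρ ^ 4 * Ifun ιc 3 u)

set_option maxHeartbeats 2000000 in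
theorem eCrit_ODE (ρ ε ν m₁ m₂ αt α₂ ιc : ℝ) (hρ : 0 < ρ) (hε : ε ∈ Set.Ico (0:ℝ) 1)
    (hν : ν ∈ Set.Icc (0:ℝ) 1) (hιc : 0 ≤ ιc) :
    eCrit ρ ε ν m₁ m₂ αt α₂ ιc 0 = 0 ∧
    ∀ u : ℝ, 0 ≤ u →
      HasDerivAt (eCrit ρ ε ν m₁ m₂ αt α₂ ιc)
        (2 * ιc * eCrit ρ ε ν m₁ m₂ αt α₂ ιc u + αt * (1 - ν) * bCrit ρ ε ν m₁ u
          + α₂ * cCrit ρ ε ν m₁ u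
          + ((1 - ν) ^ 2 * m₂ / (1 - ε)) * (1 / (2 + ρ * u) - 1 / 2)) u := by
  obtain ⟨hε0, hε1⟩ := hε
  have hεne : (1:ℝ) - ε ≠ 0 := by linarith
  have hρne : ρ ≠ 0 := ne_of_gt hρ
  constructor
  · simp [eCrit, Ifun, Lfun, intervalIntegral.integral_same]
  · intro u hu
    have h2ρ : (0:ℝ) < 2 + ρ * u := by nlinarith
    have h2ρne : (2:ℝ) + ρ * u ≠ 0 := ne_of_gt h2ρ
    have hI0 := hasDerivAt_Ifun ιc 0 u
    have hI1 := hasDerivAt_Ifun ιc 1 u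
    have hI2 := hasDerivAt_Ifun ιc 2 u
    have hI3 := hasDerivAt_Ifun ιc 3 u
    have hL := hasDerivAt_Lfun ρ (-(2*ιc)) u hρ hu
    have hE : HasDerivAt (fun t : ℝ => Real.exp (2 * ιc * t)) (2 * ιc * Real.exp (2 * ιc * u)) u := by
      have := ((hasDerivAt_id u).const_mul (2 * ιc)).exp
      simpa [mul_comm] using this
    have hG : HasDerivAt (fun t : ℝ => Real.exp (2 * ιc * t) / ρ * Lfun ρ (-(2*ιc)) t)
        (2 * ιc * Real.exp (2 * ιc * u) / ρ * Lfun ρ (-(2*ιc)) u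
          + Real.exp (2 * ιc * u) / ρ * (ρ * (Real.exp (-(2*ιc) * u) / (2 + ρ * u)))) u :=
      (hE.div_const ρ).mul hL
    have hcombo := ((((hI0.div_const 2).sub hG).const_mul
        (-((1 - ν) ^ 2 / (1 - ε)) * (m₂ - m₁ * (2 * αt * ρ - α₂ * m₁) / ρ ^ 2))).add
        (((hI1.const_mul (ρ^2))).const_mul
          ((ν * (1 - ν) * m₁ / (2 * ρ ^ 2 * (1 - ε))) * (αt - α₂ * m₁ / ρ)))).sub
        ((((hI1.const_mul (ρ^2)).add (hI2.const_mul (1/2*ρ^3))).add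
          (hI3.const_mul (1/12*ρ^4))).const_mul
          (α₂ * ν ^ 2 * m₁ ^ 2 / (4 * ρ ^ 3 * (1 - ε))))
    have hD : HasDerivAt (eCrit ρ ε ν m₁ m₂ αt α₂ ιc) _ u := hcombo
    convert hD using 1
    have hexp : Real.exp (2 * ιc * u) * Real.exp (-(2 * ιc) * u) = 1 := by
      rw [← Real.exp_add]; ring_nf; exact Real.exp_zero
    have hsimp : Real.exp (2 * ιc * u) / ρ * (ρ * (Real.exp (-(2*ιc) * u) / (2 + ρ * u)))
        = 1 / (2 + ρ * u) := by
      have h : Real.exp (2 * ιc * u) / ρ * (ρ * (Real.exp (-(2*ιc) * u) / (2 + ρ * u)))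
          = (Real.exp (2 * ιc * u) * Real.exp (-(2 * ιc) * u)) * (ρ / ρ) / (2 + ρ * u) := by
        ring
      rw [h, div_self hρne, hexp]; norm_num
      -- done
    rw [hsimp]
    simp only [eCrit, bCrit, cCrit, pow_zero, pow_one]
    set I0 := Ifun ιc 0 u
    set I1 := Ifun ιc 1 u
    set I2 := Ifun ιc 2 u
    set I3 := Ifun ιc 3 u
    set Lv := Lfun ρ (-(2*ιc)) u
    set Ev := Real.exp (2 * ιc * u)
    field_simp
    ring
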